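/- arXiv:1908.03207 — 2 statements merged into one kernel-verified Lean document; each statement's English description precedes it below -/
import Mathlib

section
/- For all nonnegative integers n, m, k with k ≤ n + m, the identity (q^{n+m-k+1};q)_k = ∑_{j=0}^k \binom{k}{j}_q q^{j(j-k+m)} (q^{n-j+1};q)_j (q^{m-k+j+1};q)_{k-j} holds. -/
open Finset

noncomputable def qPoch (q a : ℂ) (n : ℕ) : ℂ := ∏ j ∈ Finset.range n, (1 - a * q ^ j)

noncomputable def qPochInf (q a : ℂ) : ℂ := ∏' j : ℕ, (1 - a * q ^ j)

noncomputable def cauchyP (q x y : ℂ) (n : ℕ) : ℂ := ∏ j ∈ Finset.range n, (x - q ^ j * y)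

noncomputable def qBinom (q : ℂ) (n k : ℕ) : ℂ := qPoch q q n / (qPoch q q k * qPoch q q (n - k))

noncomputable def qDeriv (q : ℂ) (f : ℂ → ℂ) : ℂ → ℂ := fun x => (f x - f (q * x)) / x

noncomputable def qTheta (q : ℂ) (f : ℂ → ℂ → ℂ) : ℂ → ℂ → ℂ :=
  fun x y => (f (q⁻¹ * x) y - f x (q * y)) / (q⁻¹ * x - y)

/-- `₁Φ₁(a; 0; q, z)` -/
noncomputable def phi11 (q a z : ℂ) : ℂ :=
  ∑' m : ℕ, (-1) ^ m * q ^ m.choose 2 * qPoch q a m * z ^ m / qPoch q q m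

/-- generalized Cauchy polynomials `p_n(x,y,a)` -/
noncomputable def genCauchy (q a x y : ℂ) (n : ℕ) : ℂ :=
  ∑ k ∈ Finset.range (n + 1),
    qBinom q n k * (-1) ^ k * q ^ k.choose 2 * qPoch q a k * x ^ (n - k) * y ^ k

/-- generalized Hahn polynomials `h_n(x,y,a,b|q)` -/
noncomputable def hahn (q x y a b : ℂ) (n : ℕ) : ℂ :=
  ∑ k ∈ Finset.range (n + 1),
    qBinom q n k * (-1) ^ k * q ^ k.choose 2 * b ^ k * qPoch q a k * cauchyP q y x (n - k)

lemma qPoch_succ (q a : ℂ) (n : ℕ) :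
    qPoch q a (n+1) = qPoch q a n * (1 - a * q ^ n) := Finset.prod_range_succ _ _

lemma qPoch_succ' (q a : ℂ) (n : ℕ) :
    qPoch q a (n+1) = (1 - a) * qPoch q (q * a) n := by
  rw [qPoch, qPoch, Finset.prod_range_succ']
  rw [show (1 - a * q ^ 0) = 1 - a by simp, mul_comm]
  congr 1
  exact Finset.prod_congr rfl (fun i _ => by ring)

lemma fne (q : ℝ) (hq0 : 0 < q) (hq1 : q < 1) (t : ℕ) : (1:ℂ) - (q:ℂ) * (q:ℂ) ^ t ≠ 0 := by
  have h : (1:ℂ) - (q:ℂ) * (q:ℂ) ^ t = ((1 - q ^ (t+1) : ℝ) : ℂ) := by push_cast; ring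
  rw [h]
  norm_cast
  have : q ^ (t+1) < 1 := pow_lt_one₀ hq0.le hq1 (by omega)
  linarith

lemma Qne (q : ℝ) (hq0 : 0 < q) (hq1 : q < 1) (r : ℕ) : qPoch (q:ℂ) (q:ℂ) r ≠ 0 := by
  rw [qPoch]
  apply Finset.prod_ne_zero_iff.2
  intro i _
  exact fne q hq0 hq1 i

lemma qBinom_zero (q : ℝ) (hq0 : 0 < q) (hq1 : q < 1) (n : ℕ) : qBinom (q:ℂ) n 0 = 1 := by
  simp only [qBinom, Nat.sub_zero]
  rw [show qPoch (q:ℂ) (q:ℂ) 0 = 1 from rfl, one_mul]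
  exact div_self (Qne q hq0 hq1 n)

lemma qBinom_self (q : ℝ) (hq0 : 0 < q) (hq1 : q < 1) (n : ℕ) : qBinom (q:ℂ) n n = 1 := by
  simp only [qBinom, Nat.sub_self]
  rw [show qPoch (q:ℂ) (q:ℂ) 0 = 1 from rfl, mul_one]
  exact div_self (Qne q hq0 hq1 n)

lemma pascal (q : ℝ) (hq0 : 0 < q) (hq1 : q < 1) (j k : ℕ) (h : j < k) :
    qBinom (q:ℂ) (k+1) (j+1) = (q:ℂ)^(j+1) * qBinom (q:ℂ) k (j+1) + qBinom (q:ℂ) k j := by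
  obtain ⟨l, rfl⟩ : ∃ l, k = j + l + 1 := ⟨k - j - 1, by omega⟩
  have e1 : j + l + 1 + 1 - (j + 1) = l + 1 := by omega
  have e2 : j + l + 1 - (j + 1) = l := by omega
  have e3 : j + l + 1 - j = l + 1 := by omega
  rw [qBinom, qBinom, qBinom, e1, e2, e3]
  rw [show j + l + 1 + 1 = (j + l + 1) + 1 from rfl, qPoch_succ (q:ℂ) (q:ℂ) (j+l+1),
    qPoch_succ (q:ℂ) (q:ℂ) l, qPoch_succ (q:ℂ) (q:ℂ) j]
  have hQj := Qne q hq0 hq1 j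
  have hQl := Qne q hq0 hq1 l
  have hQjl := Qne q hq0 hq1 (j+l+1)
  have hfj := fne q hq0 hq1 j
  have hfl := fne q hq0 hq1 l
  field_simp
  ring

noncomputable def Tm (q a b : ℂ) (k j : ℕ) : ℂ :=
  qBinom q k j * a^(k-j) * qPoch q a j * qPoch q b (k-j)

noncomputable def Am (q a b : ℂ) (k j : ℕ) : ℂ :=
  qBinom q k j * q^j * a^(k-j+1) * qPoch q a j * qPoch q b (k-j+1)

noncomputable def Bm (q a b : ℂ) (k j : ℕ) : ℂ :=
  qBinom q k j * a^(k-j) * qPoch q a (j+1) * qPoch q b (k-j)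

lemma key (q : ℝ) (hq0 : 0 < q) (hq1 : q < 1) (a b : ℂ) (k : ℕ) :
    qPoch (q:ℂ) (a*b) k = ∑ j ∈ Finset.range (k+1), Tm (q:ℂ) a b k j := by
  induction k with
  | zero => simp [qPoch, qBinom, Tm]
  | succ k ih =>
    rw [qPoch_succ, ih]
    have hsplit : ∀ j ∈ Finset.range (k+1),
        Tm (q:ℂ) a b k j * (1 - a*b*(q:ℂ)^k) = Am (q:ℂ) a b k j + Bm (q:ℂ) a b k j := by
      intro j hj
      simp only [Finset.mem_range] at hj
      have hpw : (q:ℂ)^j * (q:ℂ)^(k-j) = (q:ℂ)^k := by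
        rw [← pow_add]; congr 1; omega
      simp only [Tm, Am, Bm, qPoch_succ, pow_succ]
      linear_combination (qBinom (q:ℂ) k j * a^(k-j) * qPoch (q:ℂ) a j * qPoch (q:ℂ) b (k-j) * a * b) * hpw
    calc (∑ j ∈ Finset.range (k+1), Tm (q:ℂ) a b k j) * (1 - a*b*(q:ℂ)^k)
        = ∑ j ∈ Finset.range (k+1), (Am (q:ℂ) a b k j + Bm (q:ℂ) a b k j) := by
          rw [Finset.sum_mul]; exact Finset.sum_congr rfl hsplit
      _ = (Am (q:ℂ) a b k 0 + ∑ j ∈ Finset.range k, Am (q:ℂ) a b k (j+1))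
          + ((∑ j ∈ Finset.range k, Bm (q:ℂ) a b k j) + Bm (q:ℂ) a b k k) := by
          rw [Finset.sum_add_distrib, Finset.sum_range_succ' (Am (q:ℂ) a b k) k,
            Finset.sum_range_succ (Bm (q:ℂ) a b k) k]
          ring
      _ = Tm (q:ℂ) a b (k+1) 0 + (∑ j ∈ Finset.range k, Tm (q:ℂ) a b (k+1) (j+1))
          + Tm (q:ℂ) a b (k+1) (k+1) := by
          have c1 : Tm (q:ℂ) a b (k+1) 0 = Am (q:ℂ) a b k 0 := by
            simp only [Tm, Am, Nat.sub_zero]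
            rw [qBinom_zero q hq0 hq1, qBinom_zero q hq0 hq1]
            ring
          have c2 : Tm (q:ℂ) a b (k+1) (k+1) = Bm (q:ℂ) a b k k := by
            simp only [Tm, Bm, Nat.sub_self]
            rw [qBinom_self q hq0 hq1, qBinom_self q hq0 hq1]
          have c3 : ∀ j ∈ Finset.range k,
              Tm (q:ℂ) a b (k+1) (j+1) = Am (q:ℂ) a b k (j+1) + Bm (q:ℂ) a b k j := by
            intro j hj
            simp only [Finset.mem_range] at hj
            simp only [Tm, Am, Bm]
            have e1 : k + 1 - (j+1) = k - j := by omega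
            have e2 : k - (j+1) + 1 = k - j := by omega
            rw [e1, e2, pascal q hq0 hq1 j k hj]
            ring
          rw [c1, c2, Finset.sum_congr rfl c3, Finset.sum_add_distrib]
          ring
      _ = ∑ j ∈ Finset.range (k+1+1), Tm (q:ℂ) a b (k+1) j := by
          rw [Finset.sum_range_succ' (Tm (q:ℂ) a b (k+1)) (k+1), Finset.sum_range_succ]
          ring

lemma choose_add (j d : ℕ) : (j+d).choose 2 = j.choose 2 + d.choose 2 + j*d := by
  induction d with
  | zero => simp
  | succ d ih =>
    have h1 : (j+d+1).choose 2 = (j+d).choose 2 + (j+d) := by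
      rw [Nat.choose_succ_succ]
      simp [Nat.choose_one_right]
      omega
    have h2 : (d+1).choose 2 = d.choose 2 + d := by
      rw [Nat.choose_succ_succ]
      simp [Nat.choose_one_right]
      omega
    have : j + (d+1) = (j+d)+1 := by omega
    rw [this, h1, h2, ih]
    ring

lemma reflect (q : ℂ) (hq : q ≠ 0) (N : ℤ) (j : ℕ) :
    qPoch q (q ^ (N - j + 1)) j
      = (-1)^j * q ^ (N * j - (j.choose 2 : ℤ)) * qPoch q (q ^ (-N)) j := by
  induction j with
  | zero => simp [qPoch]
  | succ j ih =>
    have hCj : (((j+1).choose 2 : ℕ) : ℤ) = (j.choose 2 : ℤ) + j := by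
      have h := choose_add j 1
      norm_num at h
      push_cast
      omega
    rw [qPoch_succ']
    rw [show (N - ((j+1:ℕ):ℤ) + 1) = N - (j:ℤ) by push_cast; ring]
    rw [show q * q ^ (N - (j:ℤ)) = q ^ (N - (j:ℤ) + 1) by rw [zpow_add_one₀ hq, mul_comm]]
    rw [ih, qPoch_succ]
    rw [show q ^ (-N) * q ^ j = q ^ ((j:ℤ) - N) by
      rw [← zpow_natCast q j, ← zpow_add₀ hq]; congr 1; ring]
    push_cast
    have f1 : q ^ (N - (j:ℤ)) * q ^ (N * (j:ℤ) - ((j.choose 2 : ℕ) : ℤ))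
        = q ^ (N * ((j:ℤ) + 1) - (((j+1).choose 2 : ℕ) : ℤ)) := by
      rw [← zpow_add₀ hq]; congr 1; rw [hCj]; ring
    have f2 : q ^ (N * ((j:ℤ)+1) - (((j+1).choose 2 : ℕ) : ℤ)) * q ^ ((j:ℤ) - N)
        = q ^ (N * (j:ℤ) - ((j.choose 2 : ℕ) : ℤ)) := by
      rw [← zpow_add₀ hq]; congr 1; rw [hCj]; ring
    linear_combination (-(-1:ℂ)^j * qPoch q (q ^ (-N)) j) * f1
      + (-(-1:ℂ)^j * qPoch q (q ^ (-N)) j) * f2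


theorem stmt10 (q : ℝ) (hq0 : 0 < q) (hq1 : q < 1) (n m k : ℕ) (hk : k ≤ n + m) :
    qPoch (q : ℂ) ((q : ℂ) ^ ((n : ℤ) + (m : ℤ) - (k : ℤ) + 1)) k =
      ∑ j ∈ Finset.range (k + 1),
        qBinom (q : ℂ) k j * (q : ℂ) ^ ((j : ℤ) * ((j : ℤ) - (k : ℤ) + (m : ℤ))) *
          qPoch (q : ℂ) ((q : ℂ) ^ ((n : ℤ) - (j : ℤ) + 1)) j *
          qPoch (q : ℂ) ((q : ℂ) ^ ((m : ℤ) - (k : ℤ) + (j : ℤ) + 1)) (k - j) := by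
  have hq : (q:ℂ) ≠ 0 := by
    simp only [ne_eq, Complex.ofReal_eq_zero]
    exact hq0.ne'
  rw [reflect (q:ℂ) hq ((n:ℤ)+(m:ℤ)) k]
  rw [show (q:ℂ) ^ (-((n:ℤ)+(m:ℤ))) = (q:ℂ)^(-(n:ℤ)) * (q:ℂ)^(-(m:ℤ)) by
    rw [← zpow_add₀ hq]; congr 1; ring]
  rw [key q hq0 hq1 _ _ k, Finset.mul_sum]
  apply Finset.sum_congr rfl
  intro j hj
  simp only [Finset.mem_range] at hj
  obtain ⟨d, rfl⟩ : ∃ d, k = j + d := ⟨k - j, by omega⟩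
  rw [show ((m:ℤ) - ((j+d:ℕ):ℤ) + (j:ℤ) + 1) = (m:ℤ) - ((d:ℕ):ℤ) + 1 by push_cast; ring]
  rw [show j + d - j = d from Nat.add_sub_cancel_left j d]
  rw [reflect (q:ℂ) hq (n:ℤ) j, reflect (q:ℂ) hq (m:ℤ) d]
  simp only [Tm, show j + d - j = d from Nat.add_sub_cancel_left j d]
  rw [show ((q:ℂ)^(-(n:ℤ)))^d = (q:ℂ)^((-(n:ℤ)) * d) by
    rw [← zpow_natCast ((q:ℂ)^(-(n:ℤ))) d, ← zpow_mul]]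
  have hS : ((-1:ℂ))^(j+d) = (-1:ℂ)^j * (-1:ℂ)^d := pow_add _ _ _
  have hC := choose_add j d
  have hQ : (q:ℂ) ^ (((n:ℤ)+(m:ℤ)) * ((j+d:ℕ):ℤ) - (((j+d).choose 2 : ℕ):ℤ))
        * (q:ℂ) ^ ((-(n:ℤ)) * (d:ℤ))
      = (q:ℂ) ^ ((j:ℤ) * ((j:ℤ) - ((j+d:ℕ):ℤ) + (m:ℤ)))
        * ((q:ℂ) ^ ((n:ℤ) * (j:ℤ) - ((j.choose 2 : ℕ):ℤ))
        * (q:ℂ) ^ ((m:ℤ) * (d:ℤ) - ((d.choose 2 : ℕ):ℤ))) := by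
    rw [← zpow_add₀ hq, ← zpow_add₀ hq, ← zpow_add₀ hq]
    congr 1
    rw [hC]
    push_cast
    ring
  linear_combination ((q:ℂ) ^ (((n:ℤ)+(m:ℤ)) * ((j+d:ℕ):ℤ) - (((j+d).choose 2 : ℕ):ℤ))
      * (q:ℂ) ^ ((-(n:ℤ)) * (d:ℤ))
      * qBinom (q:ℂ) (j+d) j * qPoch (q:ℂ) ((q:ℂ)^(-(n:ℤ))) j * qPoch (q:ℂ) ((q:ℂ)^(-(m:ℤ))) d) * hS
    + ((-1:ℂ)^j * (-1:ℂ)^d * qBinom (q:ℂ) (j+d) j * qPoch (q:ℂ) ((q:ℂ)^(-(n:ℤ))) j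
      * qPoch (q:ℂ) ((q:ℂ)^(-(m:ℤ))) d) * hQ
end

section
/- (Operational formula for generalized Hahn polynomials) Define h_n(x,y,a,b|q) := ∑_{k=0}^n \binom{n}{k}_q (−1)^k q^{\binom{k}{2}} b^k (a;q)_k p_{n−k}(y,x), and the operator L̃(a,b;θ_{xy}) := ∑_{k=0}^∞ q^{\binom{k}{2}} (a;q)_k (b θ_{xy})^k/(q;q)_k. Then L̃(a,b;θ_{xy}){p_n(y,x)} = h_n(x,y,a,b|q). -/
open Finset

lemma good_shift_left {q : ℂ} (hq : q ≠ 0) {x y : ℂ} (h : ∀ m : ℤ, x ≠ q ^ m * y) :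
    ∀ m : ℤ, q⁻¹ * x ≠ q ^ m * y := by
  intro m hm
  apply h (m + 1)
  have hx : x = q * (q⁻¹ * x) := by field_simp
  rw [hx, hm, zpow_add₀ hq, zpow_one]; ring

lemma good_shift_right {q : ℂ} (hq : q ≠ 0) {x y : ℂ} (h : ∀ m : ℤ, x ≠ q ^ m * y) :
    ∀ m : ℤ, x ≠ q ^ m * (q * y) := by
  intro m hm
  apply h (m + 1)
  rw [hm, zpow_add₀ hq, zpow_one]; ring

lemma cauchy_left {q : ℂ} (hq : q ≠ 0) (x y : ℂ) (m : ℕ) :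
    cauchyP q y (q⁻¹ * x) (m + 1) = cauchyP q y x m * (y - q⁻¹ * x) := by
  unfold cauchyP
  rw [Finset.prod_range_succ']
  simp only [pow_zero, one_mul]
  congr 1
  apply Finset.prod_congr rfl
  intro j _
  have : (q : ℂ) ^ (j + 1) * (q⁻¹ * x) = q ^ j * x := by
    rw [pow_succ]; field_simp
  rw [this]

lemma cauchy_right {q : ℂ} (hq : q ≠ 0) (x y : ℂ) (m : ℕ) :
    cauchyP q (q * y) x (m + 1) = q ^ (m + 1) * (cauchyP q y x m * (y - q⁻¹ * x)) := by
  unfold cauchyP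
  rw [Finset.prod_range_succ']
  simp only [pow_zero, one_mul]
  have h1 : ∀ j ∈ Finset.range m, (q * y - q ^ (j + 1) * x) = q * (y - q ^ j * x) := by
    intro j _; rw [pow_succ]; ring
  rw [Finset.prod_congr rfl h1, Finset.prod_mul_distrib, Finset.prod_const]
  have h2 : q * y - x = q * (y - q⁻¹ * x) := by field_simp
  rw [h2, Finset.card_range]; ring

lemma theta_iter {q : ℂ} (hq : q ≠ 0) (n : ℕ) :
    ∀ k, k ≤ n → ∀ x y : ℂ, (∀ m : ℤ, x ≠ q ^ m * y) →
      (qTheta q)^[k] (fun u v => cauchyP q v u n) x y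
        = (-1 : ℂ) ^ k * (∏ j ∈ Finset.range k, (1 - q ^ (n - j))) * cauchyP q y x (n - k) := by
  intro k
  induction k with
  | zero => intro _ x y _; simp
  | succ k ih =>
    intro hk x y hxy
    have hk' : k ≤ n := Nat.le_of_succ_le hk
    rw [Function.iterate_succ_apply']
    have h1 := ih hk' (q⁻¹ * x) y (good_shift_left hq hxy)
    have h2 := ih hk' x (q * y) (good_shift_right hq hxy)
    set m := n - (k + 1) with hmdef
    have hm : n - k = m + 1 := by omega
    rw [hm] at h1 h2
    simp only [qTheta]
    rw [h1, h2, cauchy_left hq, cauchy_right hq]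
    have hd : q⁻¹ * x - y ≠ 0 := by
      intro h0
      apply hxy 1
      have : q⁻¹ * x = y := by linear_combination h0
      rw [zpow_one]
      field_simp at this ⊢
      linear_combination this
    have hd2 : x - q * y ≠ 0 := by
      intro h0
      apply hxy 1
      rw [zpow_one]
      linear_combination h0
    rw [Finset.prod_range_succ, hm, div_eq_iff hd]
    field_simp
    ring

lemma theta_iter_zero {q : ℂ} (hq : q ≠ 0) (n : ℕ) :
    ∀ k, ∀ x y : ℂ, (∀ m : ℤ, x ≠ q ^ m * y) →
      (qTheta q)^[n + 1 + k] (fun u v => cauchyP q v u n) x y = 0 := by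
  intro k
  induction k with
  | zero =>
    intro x y hxy
    rw [Nat.add_zero, Function.iterate_succ_apply']
    have h1 := theta_iter hq n n le_rfl (q⁻¹ * x) y (good_shift_left hq hxy)
    have h2 := theta_iter hq n n le_rfl x (q * y) (good_shift_right hq hxy)
    simp only [qTheta]
    rw [h1, h2, Nat.sub_self]
    simp [cauchyP]
  | succ k ih =>
    intro x y hxy
    rw [show n + 1 + (k + 1) = (n + 1 + k) + 1 from rfl, Function.iterate_succ_apply']
    have h1 := ih (q⁻¹ * x) y (good_shift_left hq hxy)
    have h2 := ih x (q * y) (good_shift_right hq hxy)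
    simp only [qTheta]
    rw [h1, h2, sub_self, zero_div]

lemma qPoch_ne_zero {q : ℝ} (hq0 : 0 < q) (hq1 : q < 1) (m : ℕ) :
    qPoch (q : ℂ) (q : ℂ) m ≠ 0 := by
  unfold qPoch
  apply Finset.prod_ne_zero_iff.mpr
  intro j _
  have hc : (q : ℂ) * (q : ℂ) ^ j = ((q ^ (j + 1) : ℝ) : ℂ) := by push_cast; ring
  rw [hc]
  intro h
  have h1 : (q : ℝ) ^ (j + 1) = 1 := by
    have := sub_eq_zero.mp h
    exact_mod_cast this.symm
  have hlt : q ^ (j + 1) < 1 := pow_lt_one₀ hq0.le hq1 (Nat.succ_ne_zero j)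
  linarith

lemma qPoch_split (q : ℂ) (n : ℕ) :
    ∀ k, k ≤ n → qPoch q q n = qPoch q q (n - k) * ∏ j ∈ Finset.range k, (1 - q ^ (n - j)) := by
  intro k
  induction k with
  | zero => simp
  | succ k ih =>
    intro hk
    have hk' : k ≤ n := Nat.le_of_succ_le hk
    set m := n - (k + 1) with hmdef
    have h1 : n - k = m + 1 := by omega
    rw [ih hk', Finset.prod_range_succ, h1]
    unfold qPoch
    rw [Finset.prod_range_succ, pow_succ]
    ring

theorem stmt16 (q : ℝ) (hq0 : 0 < q) (hq1 : q < 1) (a b : ℂ) (n : ℕ) (x y : ℂ)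
    (hxy : ∀ m : ℤ, x ≠ (q : ℂ) ^ m * y) :
    ∑' k : ℕ, (q : ℂ) ^ k.choose 2 * qPoch (q : ℂ) a k * b ^ k / qPoch (q : ℂ) (q : ℂ) k *
        ((qTheta (q : ℂ))^[k] (fun u v => cauchyP (q : ℂ) v u n) x y) =
      hahn (q : ℂ) x y a b n := by
  have hq : (q : ℂ) ≠ 0 := by exact_mod_cast hq0.ne'
  rw [tsum_eq_sum (s := Finset.range (n + 1)) ?h0]
  · unfold hahn
    apply Finset.sum_congr rfl
    intro k hk
    have hkn : k ≤ n := by simpa [Nat.lt_succ_iff] using hk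
    rw [theta_iter hq n k hkn x y hxy]
    unfold qBinom
    rw [qPoch_split (q : ℂ) n k hkn]
    have h1 := qPoch_ne_zero hq0 hq1 k
    have h2 := qPoch_ne_zero hq0 hq1 (n - k)
    field_simp
  · intro k hk
    have hkn : n + 1 ≤ k := by simpa [Nat.lt_succ_iff, not_lt] using hk
    rw [show k = n + 1 + (k - (n + 1)) from by omega,
      theta_iter_zero hq n (k - (n + 1)) x y hxy, mul_zero]
end
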